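/- Cauchy-type identity: Σ_ρ g_ρ(x^{(1)};...;x^{(d)}) = ∏_{i₁=1}^{n₁}···∏_{i_d=1}^{n_d} (1 − x^{(1)}_{i₁}···x^{(d)}_{i_d})^{−1}, where the sum runs over all (d−1)-dimensional partitions ρ with diagram contained in [n₂]×···×[n_d]×ℤ₊ (i.e., ρ ∈ P(n₂,...,n_d,∞)), as formal power series. -/

import Mathlib

open scoped BigOperators

noncomputable section

namespace HDG

/- Throughout, the paper's dimension is `d = e + 1`: a `d`-dimensional partition is a
finitely supported, componentwise weakly decreasing function `ℕ × (Fin e → ℕ) → ℕ`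
(the first of the `d` coordinates is split off; all coordinates are 0-based). -/

variable {e : ℕ}

/-- The step `i' → i' + e_ℓ`. -/
def step (i : Fin e → ℕ) (ℓ : Fin e) : Fin e → ℕ := Function.update i ℓ (i ℓ + 1)

/-- A `d = e+1`-dimensional partition. -/
def IsPart (π : ℕ × (Fin e → ℕ) → ℕ) : Prop :=
  (Function.support π).Finite ∧
    ∀ i j : ℕ × (Fin e → ℕ), i.1 ≤ j.1 → (∀ ℓ, i.2 ℓ ≤ j.2 ℓ) → π j ≤ π i

/-- A `(d-1) = e`-dimensional partition. -/
def IsPart' (ρ : (Fin e → ℕ) → ℕ) : Prop :=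
  (Function.support ρ).Finite ∧ ∀ i j : Fin e → ℕ, (∀ ℓ, i ℓ ≤ j ℓ) → ρ j ≤ ρ i

/-- The diagram of a `(d-1)`-dimensional partition `ρ`: the points `(i', k)`
with `1 ≤ k ≤ ρ i'`. -/
def Diag (ρ : (Fin e → ℕ) → ℕ) : Set ((Fin e → ℕ) × ℕ) := {p | 1 ≤ p.2 ∧ p.2 ≤ ρ p.1}

/-- `sh₁(π)`: the projection of the diagram of `π` forgetting the first coordinate. -/
def sh1 (π : ℕ × (Fin e → ℕ) → ℕ) : Set ((Fin e → ℕ) × ℕ) :=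
  {p | ∃ i₁ : ℕ, 1 ≤ p.2 ∧ p.2 ≤ π (i₁, p.1)}

/-- `(i₁, i', k)` is a corner of `π`: a point of the diagram such that adding any of
the first `d` standard basis vectors leaves the diagram. -/
def Corner (π : ℕ × (Fin e → ℕ) → ℕ) (i₁ : ℕ) (i' : Fin e → ℕ) (k : ℕ) : Prop :=
  1 ≤ k ∧ k ≤ π (i₁, i') ∧ π (i₁ + 1, i') < k ∧ ∀ ℓ, π (i₁, step i' ℓ) < k

/-- `c_i(π)`: the number of corners of `π` with first coordinate `i₁`. -/
def cI (π : ℕ × (Fin e → ℕ) → ℕ) (i₁ : ℕ) : ℕ :=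
  Nat.card {q : (Fin e → ℕ) × ℕ | Corner π i₁ q.1 q.2}

/-- The diagram of `π` is contained in the box `[m] × [N 0] × ⋯ × [N (e-1)] × [nLast]`. -/
def InBox (m : ℕ) (N : Fin e → ℕ) (nLast : ℕ) (π : ℕ × (Fin e → ℕ) → ℕ) : Prop :=
  (∀ p, π p ≠ 0 → p.1 < m ∧ ∀ ℓ, p.2 ℓ < N ℓ) ∧ ∀ p, π p ≤ nLast

/-- The diagram of `π` is contained in `[m] × [N 0] × ⋯ × [N (e-1)] × ℤ₊`
(no bound on the values). -/
def InBox' (m : ℕ) (N : Fin e → ℕ) (π : ℕ × (Fin e → ℕ) → ℕ) : Prop :=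
  ∀ p, π p ≠ 0 → p.1 < m ∧ ∀ ℓ, p.2 ℓ < N ℓ

end HDG

open HDG
/-- The full multivariable `d`-dimensional Grothendieck polynomial with unbounded
values (`n_{d+1} = ∞`): `x^{(1)}_{i₁}` is `X (Sum.inl i₁)` and `x^{(j)}_{i_j}` is
`X (Sum.inr (j, i_j))` for `2 ≤ j ≤ d`. -/
noncomputable def gFull' (e : ℕ) (m : ℕ) (N : Fin e → ℕ)
    (ρ : (Fin e → ℕ) → ℕ) : MvPolynomial (ℕ ⊕ (Fin e × ℕ)) ℚ :=
  ∑ᶠ π ∈ {π : ℕ × (Fin e → ℕ) → ℕ | IsPart π ∧ InBox' m N π ∧ sh1 π = Diag ρ},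
    ∏ᶠ c ∈ {c : ℕ × (Fin e → ℕ) × ℕ | Corner π c.1 c.2.1 c.2.2},
      MvPolynomial.X (Sum.inl c.1) * ∏ ℓ : Fin e, MvPolynomial.X (Sum.inr (ℓ, c.2.1 ℓ))

/-- The product topology on formal power series (coefficientwise convergence). -/
instance mvPowerSeriesTopology (σ : Type*) : TopologicalSpace (MvPowerSeries σ ℚ) :=
  inferInstanceAs (TopologicalSpace ((σ →₀ ℕ) → ℚ))

namespace CAux

variable {e : ℕ}

abbrev Pt (e : ℕ) := ℕ × (Fin e → ℕ)
abbrev Sig (e : ℕ) := ℕ ⊕ (Fin e × ℕ)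

def expo (p : Pt e) : Sig e →₀ ℕ :=
  Finsupp.single (Sum.inl p.1) 1 + ∑ ℓ : Fin e, Finsupp.single (Sum.inr (ℓ, p.2 ℓ)) 1

lemma expo_apply_inl (p : Pt e) (i : ℕ) :
    expo p (Sum.inl i) = if p.1 = i then 1 else 0 := by
  classical
  simp [expo, Finsupp.single_apply, Finset.sum_apply', Finsupp.add_apply]

lemma expo_ne_zero (p : Pt e) : expo p ≠ 0 := by
  intro h
  have := expo_apply_inl p p.1
  rw [h] at this
  simp at this

def wsum (f : Pt e →₀ ℕ) : Sig e →₀ ℕ := f.sum fun p n => n • expo p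

lemma wsum_add (f g : Pt e →₀ ℕ) : wsum (f + g) = wsum f + wsum g := by
  classical
  refine Finsupp.sum_add_index ?_ ?_ <;> intros <;> simp [add_smul]

lemma wsum_single (p : Pt e) (n : ℕ) : wsum (Finsupp.single p n) = n • expo p := by
  classical
  rw [wsum, Finsupp.sum_single_index]
  simp

lemma le_wsum (f : Pt e →₀ ℕ) (p : Pt e) : f p ≤ wsum f (Sum.inl p.1) := by
  classical
  by_cases hp : p ∈ f.support
  · have : wsum f (Sum.inl p.1) = ∑ q ∈ f.support, f q * expo q (Sum.inl p.1) := by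
      rw [wsum, Finsupp.sum_apply]
      rfl
    rw [this]
    have h1 : f p * expo p (Sum.inl p.1) = f p := by
      rw [expo_apply_inl]; simp
    calc f p = f p * expo p (Sum.inl p.1) := h1.symm
    _ ≤ ∑ q ∈ f.support, f q * expo q (Sum.inl p.1) :=
      Finset.single_le_sum (f := fun q => f q * expo q (Sum.inl p.1)) (fun q _ => Nat.zero_le _) hp
  · simp [Finsupp.notMem_support_iff.mp hp]

lemma apply_le_sum (d : Sig e →₀ ℕ) (t : Sig e) : d t ≤ d.sum fun _ n => n := by
  classical
  by_cases h : t ∈ d.support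
  · rw [Finsupp.sum]
    exact Finset.single_le_sum (f := fun t => d t) (fun q _ => Nat.zero_le _) h
  · simp [Finsupp.notMem_support_iff.mp h]

lemma finite_aux (s : Finset (Pt e)) (d : Sig e →₀ ℕ) :
    Finite {f : Pt e →₀ ℕ // f.support ⊆ s ∧ wsum f = d} := by
  classical
  set B := d.sum fun _ n => n with hB
  apply Finite.of_injective (f := fun f : {f : Pt e →₀ ℕ // f.support ⊆ s ∧ wsum f = d} =>
    (fun q : ↥s => (⟨f.1 q, by
      have h1 : f.1 q.1 ≤ wsum f.1 (Sum.inl q.1.1) := le_wsum _ _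
      have h2 : wsum f.1 (Sum.inl q.1.1) ≤ B := by rw [f.2.2]; exact apply_le_sum _ _
      exact Nat.lt_succ_of_le (le_trans h1 h2)⟩ : Fin (B+1))))
  intro f g h
  ext q
  by_cases hq : q ∈ s
  · exact congrArg Fin.val (congrFun h ⟨q, hq⟩)
  · rw [Finsupp.notMem_support_iff.mp (fun hc => hq (f.2.1 hc)),
      Finsupp.notMem_support_iff.mp (fun hc => hq (g.2.1 hc))]

def count (s : Finset (Pt e)) (d : Sig e →₀ ℕ) : ℕ :=
  Nat.card {f : Pt e →₀ ℕ // f.support ⊆ s ∧ wsum f = d}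

lemma count_empty (d : Sig e →₀ ℕ) : count ∅ d = if d = 0 then 1 else 0 := by
  classical
  rcases eq_or_ne d 0 with h | h
  · subst h
    rw [if_pos rfl, count]
    rw [Nat.card_eq_one_iff_unique]
    constructor
    · constructor
      rintro ⟨f, hf, hw⟩ ⟨g, hg, hw'⟩
      have : f = 0 := by
        ext q; rw [Finsupp.notMem_support_iff.mp (fun hc => by simpa using hf hc)]; rfl
      have hg0 : g = 0 := by
        ext q; rw [Finsupp.notMem_support_iff.mp (fun hc => by simpa using hg hc)]; rfl
      simp [this, hg0]
    · exact ⟨⟨0, by simp, by simp [wsum]⟩⟩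
  · rw [if_neg h, count, Nat.card_eq_zero]
    left
    constructor
    rintro ⟨f, hf, hw⟩
    have : f = 0 := by
      ext q; rw [Finsupp.notMem_support_iff.mp (fun hc => by simpa using hf hc)]; rfl
    rw [this] at hw
    simp [wsum] at hw
    exact h hw.symm


lemma wsum_sub_single {q : Pt e} {f : Pt e →₀ ℕ} (h : Finsupp.single q 1 ≤ f) :
    wsum (f - Finsupp.single q 1) + expo q = wsum f := by
  conv_rhs => rw [← tsub_add_cancel_of_le h]
  rw [wsum_add, wsum_single, one_smul]

lemma wsum_le_of_single_le {q : Pt e} {f : Pt e →₀ ℕ} (h : Finsupp.single q 1 ≤ f) :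
    expo q ≤ wsum f := by
  calc expo q ≤ wsum (f - Finsupp.single q 1) + expo q := le_add_self
  _ = wsum f := wsum_sub_single h

lemma count_insert_of_le {q : Pt e} {s : Finset (Pt e)} (hq : q ∉ s) {d : Sig e →₀ ℕ}
    (hd : expo q ≤ d) :
    count (insert q s) d = count s d + count (insert q s) (d - expo q) := by
  classical
  set A := {f : Pt e →₀ ℕ // f.support ⊆ insert q s ∧ wsum f = d} with hA
  have : Finite A := finite_aux _ _
  have h0 : count (insert q s) d = Nat.card {a : A // a.1 q = 0} +
      Nat.card {a : A // ¬ a.1 q = 0} := by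
    rw [count, ← Nat.card_sum, Nat.card_congr (Equiv.sumCompl (fun a : A => a.1 q = 0))]
  have e1 : {a : A // a.1 q = 0} ≃ {f : Pt e →₀ ℕ // f.support ⊆ s ∧ wsum f = d} :=
    { toFun := fun a => ⟨a.1.1, fun t ht => by
        rcases Finset.mem_insert.mp (a.1.2.1 ht) with h | h
        · exact absurd (h ▸ Finsupp.mem_support_iff.mp ht) (by simpa using a.2)
        · exact h, a.1.2.2⟩
      invFun := fun f => ⟨⟨f.1, f.2.1.trans (Finset.subset_insert q s), f.2.2⟩,
        Finsupp.notMem_support_iff.mp (fun hc => hq (f.2.1 hc))⟩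
      left_inv := fun a => by ext : 3; rfl
      right_inv := fun f => by ext : 2; rfl }
  have e2 : {a : A // ¬ a.1 q = 0} ≃
      {f : Pt e →₀ ℕ // f.support ⊆ insert q s ∧ wsum f = d - expo q} :=
    { toFun := fun a => ⟨a.1.1 - Finsupp.single q 1,
        Finsupp.support_tsub.trans a.1.2.1, by
          have hle : Finsupp.single q 1 ≤ a.1.1 :=
            Finsupp.single_le_iff.mpr (Nat.one_le_iff_ne_zero.mpr a.2)
          exact eq_tsub_of_add_eq ((wsum_sub_single hle).trans a.1.2.2)⟩
      invFun := fun g => ⟨⟨g.1 + Finsupp.single q 1, by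
          refine Finsupp.support_add.trans ?_
          refine Finset.union_subset g.2.1 ?_
          refine (Finsupp.support_single_subset).trans ?_
          simp, by
          rw [wsum_add, g.2.2, wsum_single, one_smul, tsub_add_cancel_of_le hd]⟩, by
          simp [Finsupp.add_apply]⟩
      left_inv := fun a => by
        have hle : Finsupp.single q 1 ≤ a.1.1 :=
          Finsupp.single_le_iff.mpr (Nat.one_le_iff_ne_zero.mpr a.2)
        ext : 3
        · exact congrFun (congrArg _ (tsub_add_cancel_of_le hle)) _
      right_inv := fun g => by
        ext : 2
        exact congrFun (congrArg _ (add_tsub_cancel_right g.1 (Finsupp.single q 1))) _ }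
  rw [h0, count, count, Nat.card_congr e1, Nat.card_congr e2]

lemma count_insert_of_not_le {q : Pt e} {s : Finset (Pt e)} (hq : q ∉ s) {d : Sig e →₀ ℕ}
    (hd : ¬ expo q ≤ d) : count (insert q s) d = count s d := by
  classical
  refine Nat.card_congr ?_
  refine
    { toFun := fun a => ⟨a.1, fun t ht => ?_, a.2.2⟩
      invFun := fun f => ⟨f.1, f.2.1.trans (Finset.subset_insert q s), f.2.2⟩
      left_inv := fun a => by ext : 2; rfl
      right_inv := fun f => by ext : 2; rfl }
  have haq : a.1 q = 0 := by
    by_contra hne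
    exact hd (a.2.2 ▸ wsum_le_of_single_le
      (Finsupp.single_le_iff.mpr (Nat.one_le_iff_ne_zero.mpr hne)))
  rcases Finset.mem_insert.mp (a.2.1 ht) with h | h
  · exact absurd (h ▸ Finsupp.mem_support_iff.mp ht) (by simpa using haq)
  · exact h

def mon (p : Pt e) : MvPowerSeries (Sig e) ℚ := MvPowerSeries.monomial (expo p) 1

def SC (s : Finset (Pt e)) : MvPowerSeries (Sig e) ℚ := fun d => (count s d : ℚ)

lemma coeff_SC (s : Finset (Pt e)) (d : Sig e →₀ ℕ) :
    MvPowerSeries.coeff d (SC s) = count s d := rfl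

lemma constantCoeff_one_sub_mon (q : Pt e) :
    MvPowerSeries.constantCoeff (1 - mon q) = 1 := by
  classical
  rw [map_sub, map_one, mon]
  rw [← MvPowerSeries.coeff_zero_eq_constantCoeff_apply, MvPowerSeries.coeff_monomial]
  rw [if_neg (fun h => expo_ne_zero q h.symm)]
  ring

lemma geom_prod (s : Finset (Pt e)) : ∏ q ∈ s, (1 - mon q)⁻¹ = SC s := by
  classical
  induction s using Finset.induction_on with
  | empty =>
    rw [Finset.prod_empty]
    refine (MvPowerSeries.ext fun d => ?_).symm
    rw [coeff_SC, count_empty, MvPowerSeries.coeff_one]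
    split <;> simp
  | @insert q s hq ih =>
    rw [Finset.prod_insert hq, ih, mul_comm]
    symm
    rw [MvPowerSeries.eq_mul_inv_iff_mul_eq (by rw [constantCoeff_one_sub_mon]; norm_num)]
    refine MvPowerSeries.ext fun d => ?_
    rw [mul_sub, mul_one, map_sub, mon, MvPowerSeries.coeff_mul_monomial]
    by_cases hd : expo q ≤ d
    · rw [if_pos hd, mul_one, coeff_SC, coeff_SC, coeff_SC, count_insert_of_le hq hd]
      push_cast; ring
    · rw [if_neg hd, coeff_SC, coeff_SC, count_insert_of_not_le hq hd]
      simp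


section Partitions

variable (m : ℕ) (N : Fin e → ℕ)

def posF : Finset (Pt e) := Finset.range m ×ˢ Fintype.piFinset fun ℓ => Finset.range (N ℓ)

lemma mem_posF {p : Pt e} : p ∈ posF m N ↔ p.1 < m ∧ ∀ ℓ, p.2 ℓ < N ℓ := by
  simp [posF, Finset.mem_product, Fintype.mem_piFinset]

def mx (π : Pt e → ℕ) (p : Pt e) : ℕ :=
  max (π (p.1+1, p.2)) (Finset.univ.sup fun ℓ => π (p.1, step p.2 ℓ))

def phiFun (π : Pt e → ℕ) : Pt e → ℕ := fun p => π p - mx π p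

lemma step_le (v : Fin e → ℕ) (ℓ ℓ' : Fin e) : v ℓ' ≤ step v ℓ ℓ' := by
  rw [step, Function.update_apply]
  by_cases h : ℓ' = ℓ
  · subst h; simp
  · simp [h]

lemma mx_le {π : Pt e → ℕ} (h : IsPart π) (p : Pt e) : mx π p ≤ π p := by
  refine max_le (h.2 p (p.1+1, p.2) (Nat.le_succ _) fun ℓ => le_rfl) ?_
  exact Finset.sup_le fun ℓ _ => h.2 p (p.1, step p.2 ℓ) le_rfl (step_le p.2 ℓ)

lemma mono_of_steps {π : Pt e → ℕ} (h1 : ∀ p : Pt e, π (p.1+1, p.2) ≤ π p)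
    (h2 : ∀ (p : Pt e) ℓ, π (p.1, step p.2 ℓ) ≤ π p) :
    ∀ i j : Pt e, i.1 ≤ j.1 → (∀ ℓ, i.2 ℓ ≤ j.2 ℓ) → π j ≤ π i := by
  have hA : ∀ (a b : ℕ) (v : Fin e → ℕ), a ≤ b → π (b, v) ≤ π (a, v) := by
    intro a b v hab
    induction b, hab using Nat.le_induction with
    | base => exact le_rfl
    | succ b hab ih => exact le_trans (h1 (b, v)) ih
  have hB : ∀ (n a : ℕ) (v w : Fin e → ℕ), (∀ ℓ, v ℓ ≤ w ℓ) →
      (∑ ℓ, (w ℓ - v ℓ)) = n → π (a, w) ≤ π (a, v) := by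
    intro n
    induction n using Nat.strong_induction_on with
    | _ n ih =>
      intro a v w hvw hsum
      by_cases hvweq : v = w
      · subst hvweq; exact le_rfl
      · have hex : ∃ ℓ, v ℓ < w ℓ := by
          by_contra hc
          push_neg at hc
          exact hvweq (funext fun ℓ => le_antisymm (hvw ℓ) (hc ℓ))
        obtain ⟨ℓ, hℓ⟩ := hex
        have hstep : ∀ ℓ', step v ℓ ℓ' ≤ w ℓ' := by
          intro ℓ'
          rw [step, Function.update_apply]
          by_cases h : ℓ' = ℓ
          · subst h; simp; omega
          · simp [h]; exact hvw ℓ'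
        have hsum1 : ∑ ℓ', (w ℓ' - v ℓ') =
            (w ℓ - v ℓ) + ∑ ℓ' ∈ Finset.univ.erase ℓ, (w ℓ' - v ℓ') :=
          (Finset.add_sum_erase _ _ (Finset.mem_univ ℓ)).symm
        have hsum2 : ∑ ℓ', (w ℓ' - step v ℓ ℓ') =
            (w ℓ - (v ℓ + 1)) + ∑ ℓ' ∈ Finset.univ.erase ℓ, (w ℓ' - v ℓ') := by
          rw [← Finset.add_sum_erase _ (fun ℓ' => w ℓ' - step v ℓ ℓ') (Finset.mem_univ ℓ)]
          congr 1
          · rw [step, Function.update_self]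
          · refine Finset.sum_congr rfl fun ℓ' hℓ' => ?_
            rw [step, Function.update_apply, if_neg (Finset.ne_of_mem_erase hℓ')]
        have hn : (∑ ℓ', (w ℓ' - step v ℓ ℓ')) < n := by omega
        exact le_trans (ih _ hn a (step v ℓ) w hstep rfl) (h2 (a, v) ℓ)
  intro i j hij hij2
  calc π j = π (j.1, j.2) := rfl
  _ ≤ π (j.1, i.2) := hB _ j.1 i.2 j.2 hij2 rfl
  _ ≤ π (i.1, i.2) := hA i.1 j.1 i.2 hij

def fuel (p : Pt e) : ℕ := (m - p.1) + ∑ ℓ, (N ℓ - p.2 ℓ)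

lemma fuel_pos {p : Pt e} (hp : p.1 < m ∧ ∀ ℓ, p.2 ℓ < N ℓ) : 1 ≤ fuel m N p := by
  have := hp.1
  rw [fuel]
  omega

lemma fuel_nbr1 {p : Pt e} (hp : p.1 < m ∧ ∀ ℓ, p.2 ℓ < N ℓ) :
    fuel m N (p.1+1, p.2) + 1 ≤ fuel m N p := by
  have := hp.1
  rw [fuel, fuel]
  simp only [Prod.fst, Prod.snd] at *
  omega

lemma fuel_nbr2 {p : Pt e} (hp : p.1 < m ∧ ∀ ℓ, p.2 ℓ < N ℓ) (ℓ : Fin e) :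
    fuel m N (p.1, step p.2 ℓ) + 1 ≤ fuel m N p := by
  have hℓ := hp.2 ℓ
  rw [fuel, fuel]
  have hsum1 : ∑ ℓ', (N ℓ' - p.2 ℓ') =
      (N ℓ - p.2 ℓ) + ∑ ℓ' ∈ Finset.univ.erase ℓ, (N ℓ' - p.2 ℓ') :=
    (Finset.add_sum_erase _ _ (Finset.mem_univ ℓ)).symm
  have hsum2 : ∑ ℓ', (N ℓ' - step p.2 ℓ ℓ') =
      (N ℓ - (p.2 ℓ + 1)) + ∑ ℓ' ∈ Finset.univ.erase ℓ, (N ℓ' - p.2 ℓ') := by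
    rw [← Finset.add_sum_erase _ (fun ℓ' => N ℓ' - step p.2 ℓ ℓ') (Finset.mem_univ ℓ)]
    congr 1
    · rw [step, Function.update_self]
    · refine Finset.sum_congr rfl fun ℓ' hℓ' => ?_
      rw [step, Function.update_apply, if_neg (Finset.ne_of_mem_erase hℓ')]
  simp only [Prod.fst, Prod.snd] at *
  omega

open Classical in
def psiF (c : Pt e → ℕ) : ℕ → Pt e → ℕ
  | 0, _ => 0
  | n+1, p =>
    if p.1 < m ∧ ∀ ℓ, p.2 ℓ < N ℓ then
      c p + max (psiF c n (p.1+1, p.2)) (Finset.univ.sup fun ℓ => psiF c n (p.1, step p.2 ℓ))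
    else 0

def psi (c : Pt e → ℕ) (p : Pt e) : ℕ := psiF m N c (fuel m N p) p

lemma psiF_succ (c : Pt e → ℕ) (n : ℕ) (p : Pt e) :
    psiF m N c (n+1) p =
    if p.1 < m ∧ ∀ ℓ, p.2 ℓ < N ℓ then
      c p + max (psiF m N c n (p.1+1, p.2))
        (Finset.univ.sup fun ℓ => psiF m N c n (p.1, step p.2 ℓ))
    else 0 := rfl

lemma psiF_succ_eq (c : Pt e → ℕ) :
    ∀ n p, fuel m N p ≤ n → psiF m N c (n+1) p = psiF m N c n p := by
  intro n
  induction n with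
  | zero =>
    intro p hp
    have hnp : ¬(p.1 < m ∧ ∀ ℓ, p.2 ℓ < N ℓ) := fun h => by
      have := fuel_pos m N h; omega
    simp [psiF, hnp]
  | succ n ih =>
    intro p hp
    by_cases hbox : p.1 < m ∧ ∀ ℓ, p.2 ℓ < N ℓ
    · have e1 : fuel m N (p.1+1, p.2) ≤ n := by have := fuel_nbr1 m N hbox; omega
      have e2 : ∀ ℓ, fuel m N (p.1, step p.2 ℓ) ≤ n := fun ℓ => by
        have := fuel_nbr2 m N hbox ℓ; omega
      show psiF m N c (n+1+1) p = psiF m N c (n+1) p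
      conv_lhs => rw [psiF_succ]
      conv_rhs => rw [psiF_succ]
      rw [if_pos hbox, if_pos hbox, ih _ e1,
        Finset.sup_congr rfl fun ℓ _ => ih _ (e2 ℓ)]
    · show psiF m N c (n+1+1) p = psiF m N c (n+1) p
      conv_lhs => rw [psiF_succ]
      conv_rhs => rw [psiF_succ]
      rw [if_neg hbox, if_neg hbox]

lemma psiF_eq_psi (c : Pt e → ℕ) :
    ∀ n p, fuel m N p ≤ n → psiF m N c n p = psi m N c p := by
  intro n
  induction n with
  | zero =>
    intro p hp
    have h0 : fuel m N p = 0 := Nat.le_zero.mp hp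
    rw [psi, h0]
  | succ n ih =>
    intro p hp
    rcases Nat.lt_or_ge (fuel m N p) (n+1) with h | h
    · have h' : fuel m N p ≤ n := by omega
      rw [psiF_succ_eq m N c n p h', ih p h']
    · have : fuel m N p = n + 1 := by omega
      rw [psi, this]

lemma psi_spec {c : Pt e → ℕ} {p : Pt e} (hbox : p.1 < m ∧ ∀ ℓ, p.2 ℓ < N ℓ) :
    psi m N c p = c p + mx (psi m N c) p := by
  obtain ⟨k, hk⟩ : ∃ k, fuel m N p = k + 1 := by
    have := fuel_pos m N hbox
    exact ⟨fuel m N p - 1, by omega⟩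
  rw [psi, hk, psiF_succ, if_pos hbox, mx]
  congr 1
  congr 1
  · exact psiF_eq_psi m N c k _ (by have := fuel_nbr1 m N hbox; omega)
  · exact Finset.sup_congr rfl fun ℓ _ =>
      psiF_eq_psi m N c k _ (by have := fuel_nbr2 m N hbox ℓ; omega)

lemma psi_out {c : Pt e → ℕ} {p : Pt e} (hbox : ¬(p.1 < m ∧ ∀ ℓ, p.2 ℓ < N ℓ)) :
    psi m N c p = 0 := by
  rw [psi]
  cases hf : fuel m N p with
  | zero => rfl
  | succ n => rw [psiF_succ, if_neg hbox]

lemma psi_support {c : Pt e → ℕ} {p : Pt e} (h : psi m N c p ≠ 0) :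
    p.1 < m ∧ ∀ ℓ, p.2 ℓ < N ℓ := by
  by_contra hc
  exact h (psi_out m N hc)

lemma psi_step1 (c : Pt e → ℕ) (p : Pt e) : psi m N c (p.1+1, p.2) ≤ psi m N c p := by
  by_cases hbox : p.1 < m ∧ ∀ ℓ, p.2 ℓ < N ℓ
  · rw [psi_spec m N hbox, mx]
    exact le_trans (le_max_left _ _) (Nat.le_add_left _ _)
  · have hnb : ¬((p.1+1, p.2).1 < m ∧ ∀ ℓ, (p.1+1, p.2).2 ℓ < N ℓ) := fun h =>
      hbox ⟨by have := h.1; simp at this ⊢; omega, h.2⟩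
    rw [psi_out m N hnb]
    exact Nat.zero_le _

lemma psi_step2 (c : Pt e → ℕ) (p : Pt e) (ℓ : Fin e) :
    psi m N c (p.1, step p.2 ℓ) ≤ psi m N c p := by
  by_cases hbox : p.1 < m ∧ ∀ ℓ, p.2 ℓ < N ℓ
  · rw [psi_spec m N hbox, mx]
    calc psi m N c (p.1, step p.2 ℓ)
        ≤ Finset.univ.sup (fun ℓ => psi m N c (p.1, step p.2 ℓ)) :=
          Finset.le_sup (f := fun ℓ => psi m N c (p.1, step p.2 ℓ)) (Finset.mem_univ ℓ)
      _ ≤ max (psi m N c (p.1+1, p.2))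
            (Finset.univ.sup fun ℓ => psi m N c (p.1, step p.2 ℓ)) := le_max_right _ _
      _ ≤ c p + _ := Nat.le_add_left _ _
  · have hnb : ¬((p.1, step p.2 ℓ).1 < m ∧ ∀ ℓ', (p.1, step p.2 ℓ).2 ℓ' < N ℓ') := by
      intro h
      exact hbox ⟨h.1, fun ℓ' => lt_of_le_of_lt (step_le p.2 ℓ ℓ') (h.2 ℓ')⟩
    rw [psi_out m N hnb]
    exact Nat.zero_le _

lemma phiFun_support_subset (π : Pt e → ℕ) :
    Function.support (phiFun π) ⊆ Function.support π := by
  intro p hp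
  simp only [Function.mem_support, phiFun] at hp ⊢
  omega

lemma psi_phiFun {π : Pt e → ℕ} (hπ : IsPart π) (hbox : InBox' m N π) (p : Pt e) :
    psi m N (phiFun π) p = π p := by
  have key : ∀ n p, fuel m N p = n → psi m N (phiFun π) p = π p := by
    intro n
    induction n using Nat.strong_induction_on with
    | _ n ih =>
      intro p hfp
      by_cases hb : p.1 < m ∧ ∀ ℓ, p.2 ℓ < N ℓ
      · rw [psi_spec m N hb]
        have hmx : mx (psi m N (phiFun π)) p = mx π p := by
          rw [mx, mx]
          congr 1
          · exact ih _ (by have := fuel_nbr1 m N hb; omega) _ rfl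
          · exact Finset.sup_congr rfl fun ℓ _ =>
              ih _ (by have := fuel_nbr2 m N hb ℓ; omega) _ rfl
        rw [hmx, phiFun, Nat.sub_add_cancel (mx_le hπ p)]
      · rw [psi_out m N hb]
        by_contra hne
        exact hb (hbox p fun h0 => hne h0.symm)
  exact key _ p rfl

lemma phiFun_psi (f : Pt e →₀ ℕ) (hf : f.support ⊆ posF m N) (p : Pt e) :
    phiFun (psi m N ⇑f) p = f p := by
  by_cases hb : p.1 < m ∧ ∀ ℓ, p.2 ℓ < N ℓ
  · rw [phiFun]
    rw [psi_spec m N hb, Nat.add_sub_cancel]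
  · have h1 : psi m N (⇑f) p = 0 := psi_out m N hb
    have h2 : f p = 0 := by
      by_contra hne
      exact hb ((mem_posF m N).mp (hf (Finsupp.mem_support_iff.mpr hne)))
    rw [phiFun, h1, h2]
    simp

def PhiF (π : {π : Pt e → ℕ // IsPart π ∧ InBox' m N π}) :
    {f : Pt e →₀ ℕ // f.support ⊆ posF m N} :=
  ⟨Finsupp.ofSupportFinite (phiFun π.1) (π.2.1.1.subset (phiFun_support_subset π.1)), by
    intro p hp
    rw [Finsupp.mem_support_iff, Finsupp.ofSupportFinite_coe] at hp
    have hπ : π.1 p ≠ 0 := fun h0 => hp (by simp [phiFun, h0])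
    exact (mem_posF m N).mpr (π.2.2 p hπ)⟩

def PsiF (f : {f : Pt e →₀ ℕ // f.support ⊆ posF m N}) :
    {π : Pt e → ℕ // IsPart π ∧ InBox' m N π} :=
  ⟨psi m N ⇑f.1,
    ⟨⟨Set.Finite.subset (posF m N).finite_toSet (fun p hp =>
        (mem_posF m N).mpr (psi_support m N hp)),
      mono_of_steps (psi_step1 m N _) (psi_step2 m N _)⟩,
      fun p hp => psi_support m N hp⟩⟩

lemma PhiF_coe (π : {π : Pt e → ℕ // IsPart π ∧ InBox' m N π}) :
    ⇑(PhiF m N π).1 = phiFun π.1 := Finsupp.ofSupportFinite_coe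

lemma PsiF_coe (f : {f : Pt e →₀ ℕ // f.support ⊆ posF m N}) :
    (PsiF m N f).1 = psi m N ⇑f.1 := rfl

def PhiEquiv : {π : Pt e → ℕ // IsPart π ∧ InBox' m N π} ≃
    {f : Pt e →₀ ℕ // f.support ⊆ posF m N} where
  toFun := PhiF m N
  invFun := PsiF m N
  left_inv := by
    intro π
    refine Subtype.ext (funext fun p => ?_)
    rw [PsiF_coe, PhiF_coe]
    exact psi_phiFun m N π.2.1 π.2.2 p
  right_inv := by
    intro f
    refine Subtype.ext (Finsupp.ext fun p => ?_)
    have h1 : ⇑(PhiF m N (PsiF m N f)).1 = phiFun (psi m N ⇑f.1) := by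
      rw [PhiF_coe, PsiF_coe]
    rw [h1]
    exact phiFun_psi m N f.1 f.2 p

end Partitions

section Weight

variable (m : ℕ) (N : Fin e → ℕ)

lemma prod_monomial {ι : Type*} (t : Finset ι) (a : ι → (Sig e →₀ ℕ)) :
    ∏ i ∈ t, MvPolynomial.monomial (a i) (1:ℚ) = MvPolynomial.monomial (∑ i ∈ t, a i) 1 := by
  classical
  induction t using Finset.cons_induction with
  | empty => simp
  | cons i t hi ih =>
    rw [Finset.prod_cons, ih, MvPolynomial.monomial_mul, one_mul, Finset.sum_cons]

lemma X_prod_eq_monomial (p : Pt e) :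
    (MvPolynomial.X (Sum.inl p.1) *
      ∏ ℓ : Fin e, MvPolynomial.X (Sum.inr (ℓ, p.2 ℓ)) : MvPolynomial (Sig e) ℚ)
      = MvPolynomial.monomial (expo p) 1 := by
  have h1 : ∀ (s : Sig e),
      (MvPolynomial.X s : MvPolynomial (Sig e) ℚ)
        = MvPolynomial.monomial (Finsupp.single s 1) 1 := fun s => rfl
  rw [h1]
  rw [show (∏ ℓ : Fin e, MvPolynomial.X (Sum.inr (ℓ, p.2 ℓ)) : MvPolynomial (Sig e) ℚ)
      = ∏ ℓ : Fin e, MvPolynomial.monomial (Finsupp.single (Sum.inr (ℓ, p.2 ℓ) : Sig e) 1) 1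
    from Finset.prod_congr rfl fun ℓ _ => h1 _]
  rw [prod_monomial, MvPolynomial.monomial_mul, one_mul]
  rfl

lemma mx_mk (π : Pt e → ℕ) (i₁ : ℕ) (i' : Fin e → ℕ) :
    mx π (i₁, i') = max (π (i₁+1, i')) (Finset.univ.sup fun ℓ => π (i₁, step i' ℓ)) := rfl

lemma corner_iff {π : Pt e → ℕ} (i₁ : ℕ) (i' : Fin e → ℕ) (k : ℕ) :
    Corner π i₁ i' k ↔ mx π (i₁, i') < k ∧ k ≤ π (i₁, i') := by
  rw [mx_mk]
  constructor
  · rintro ⟨h1, h2, h3, h4⟩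
    exact ⟨max_lt h3 ((Finset.sup_lt_iff (by rw [show (⊥:ℕ) = 0 from rfl]; omega : (⊥:ℕ) < k)).mpr fun ℓ _ => h4 ℓ), h2⟩
  · rintro ⟨h1, h2⟩
    rcases max_lt_iff.mp h1 with ⟨h3, h5⟩
    refine ⟨by omega, h2, h3, fun ℓ => ?_⟩
    exact lt_of_le_of_lt (Finset.le_sup (f := fun ℓ => π (i₁, step i' ℓ)) (Finset.mem_univ ℓ)) h5

lemma CS_finite {π : Pt e → ℕ} (hπ : IsPart π) (hbox : InBox' m N π) :
    {c : ℕ × (Fin e → ℕ) × ℕ | Corner π c.1 c.2.1 c.2.2}.Finite := by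
  set B := π (0, fun _ => 0) with hB
  refine Set.Finite.subset (Finset.finite_toSet
    (Finset.range m ×ˢ (Fintype.piFinset (fun ℓ => Finset.range (N ℓ)) ×ˢ
      Finset.Icc 1 B))) ?_
  rintro ⟨i₁, i', k⟩ hc
  obtain ⟨h1, h2, h3, h4⟩ := hc
  have h1' : 1 ≤ k := h1
  have h2' : k ≤ π (i₁, i') := h2
  have hne : π (i₁, i') ≠ 0 := by omega
  obtain ⟨hm, hN⟩ := hbox (i₁, i') hne
  have hkB : k ≤ B := le_trans h2' (hπ.2 (0, fun _ => 0) (i₁, i') (Nat.zero_le _)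
    (fun ℓ => Nat.zero_le _))
  simp only [Finset.coe_product, Set.mem_prod, Finset.mem_coe, Finset.mem_range,
    Fintype.mem_piFinset, Finset.mem_Icc]
  exact ⟨hm, fun ℓ => hN ℓ, h1, hkB⟩

lemma wpoly_eq {π : Pt e → ℕ} (hπ : IsPart π) (hbox : InBox' m N π) :
    (∏ᶠ c ∈ {c : ℕ × (Fin e → ℕ) × ℕ | Corner π c.1 c.2.1 c.2.2},
      MvPolynomial.X (Sum.inl c.1) *
        ∏ ℓ : Fin e, MvPolynomial.X (Sum.inr (ℓ, c.2.1 ℓ)) : MvPolynomial (Sig e) ℚ)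
    = MvPolynomial.monomial (∑ p ∈ posF m N, (phiFun π p) • expo p) 1 := by
  classical
  have hfin := CS_finite m N hπ hbox
  rw [finprod_mem_eq_finite_toFinset_prod _ hfin]
  have hmem : ∀ c : ℕ × (Fin e → ℕ) × ℕ,
      c ∈ hfin.toFinset ↔ Corner π c.1 c.2.1 c.2.2 := fun c => Set.Finite.mem_toFinset hfin
  rw [Finset.prod_congr rfl (fun c _ => X_prod_eq_monomial (c.1, c.2.1))]
  have hmap : ∀ c ∈ hfin.toFinset, (c.1, c.2.1) ∈ posF m N := by
    intro c hc
    rw [hmem] at hc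
    obtain ⟨h1, h2, _, _⟩ := hc
    have h1' : 1 ≤ c.2.2 := h1
    have h2' : c.2.2 ≤ π (c.1, c.2.1) := h2
    have hne : π (c.1, c.2.1) ≠ 0 := by omega
    exact (mem_posF m N).mpr (hbox _ hne)
  rw [← Finset.prod_fiberwise_of_maps_to hmap
    (fun c : ℕ × (Fin e → ℕ) × ℕ => MvPolynomial.monomial (expo (c.1, c.2.1)) (1:ℚ))]
  have hinner : ∀ p ∈ posF m N,
      (∏ c ∈ hfin.toFinset.filter (fun c => (c.1, c.2.1) = p),
        MvPolynomial.monomial (expo (c.1, c.2.1)) (1:ℚ))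
      = MvPolynomial.monomial (expo p) (1:ℚ) ^ (phiFun π p) := by
    intro p hp
    rw [Finset.prod_congr rfl (fun c hc => by
      rw [(Finset.mem_filter.mp hc).2]), Finset.prod_const]
    congr 1
    have hset : hfin.toFinset.filter (fun c => (c.1, c.2.1) = p)
        = (Finset.Ioc (mx π p) (π p)).map
          ⟨fun k => (p.1, p.2, k), fun a b hab => by
            simpa using congrArg (fun c : ℕ × (Fin e → ℕ) × ℕ => c.2.2) hab⟩ := by
      refine Finset.ext fun c => ?_
      rw [Finset.mem_filter, hmem, Finset.mem_map]
      constructor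
      · rintro ⟨hc, hcp⟩
        rw [corner_iff] at hc
        refine ⟨c.2.2, ?_, ?_⟩
        · rw [Finset.mem_Ioc, ← hcp]
          exact ⟨hc.1, hc.2⟩
        · show (p.1, p.2, c.2.2) = c
          rw [← hcp]
      · rintro ⟨k, hk, rfl⟩
        rw [Finset.mem_Ioc] at hk
        constructor
        · rw [corner_iff]
          exact hk
        · rfl
    rw [hset, Finset.card_map, Nat.card_Ioc]
    rfl
  rw [Finset.prod_congr rfl hinner]
  rw [Finset.prod_congr rfl (fun p _ => by
    rw [MvPolynomial.monomial_pow, one_pow])]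
  rw [prod_monomial]

end Weight

section Assembly

variable (m : ℕ) (N : Fin e → ℕ)

instance : T2Space (MvPowerSeries (Sig e) ℚ) :=
  inferInstanceAs (T2Space ((Sig e →₀ ℕ) → ℚ))

instance : RegularSpace (MvPowerSeries (Sig e) ℚ) :=
  inferInstanceAs (RegularSpace ((Sig e →₀ ℕ) → ℚ))

instance : ContinuousAdd (MvPowerSeries (Sig e) ℚ) :=
  inferInstanceAs (ContinuousAdd ((Sig e →₀ ℕ) → ℚ))

lemma hasSum_FT :
    HasSum (fun f : {f : Pt e →₀ ℕ // f.support ⊆ posF m N} =>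
      (MvPowerSeries.monomial (wsum f.1) 1 : MvPowerSeries (Sig e) ℚ))
      (SC (posF m N)) := by
  classical
  have key : ∀ d : Sig e →₀ ℕ,
      HasSum (fun f : {f : Pt e →₀ ℕ // f.support ⊆ posF m N} =>
        MvPowerSeries.coeff d (MvPowerSeries.monomial (wsum f.1) 1))
        ((count (posF m N) d : ℚ)) := by
    intro d
    have hfin : Finite {f : {f : Pt e →₀ ℕ // f.support ⊆ posF m N} // wsum f.1 = d} := by
      have h := finite_aux (posF m N) d
      exact Finite.of_equiv _ (Equiv.subtypeSubtypeEquivSubtypeInter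
        (fun f : Pt e →₀ ℕ => f.support ⊆ posF m N) (fun f => wsum f = d)).symm
    have hSfin : {f : {f : Pt e →₀ ℕ // f.support ⊆ posF m N} | wsum f.1 = d}.Finite :=
      Set.finite_coe_iff.mp hfin
    have h0 : ∀ f ∉ hSfin.toFinset,
        MvPowerSeries.coeff d (MvPowerSeries.monomial (wsum f.1) (1:ℚ)) = 0 := by
      intro f hf
      rw [Set.Finite.mem_toFinset] at hf
      rw [MvPowerSeries.coeff_monomial, if_neg (fun hh => hf hh.symm)]
    have h1 := hasSum_sum_of_ne_finset_zero (L := .unconditional _) h0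
    have hterm : ∀ f ∈ hSfin.toFinset,
        MvPowerSeries.coeff d (MvPowerSeries.monomial (wsum f.1) (1:ℚ)) = (1:ℚ) := by
      intro f hf
      rw [Set.Finite.mem_toFinset] at hf
      rw [MvPowerSeries.coeff_monomial, if_pos hf.symm]
    have h2 : (∑ f ∈ hSfin.toFinset,
        MvPowerSeries.coeff d (MvPowerSeries.monomial (wsum f.1) (1:ℚ)))
        = (count (posF m N) d : ℚ) := by
      rw [Finset.sum_congr rfl hterm, Finset.sum_const, nsmul_eq_mul, mul_one]
      congr 1
      rw [← Set.ncard_eq_toFinset_card _ hSfin, ← Nat.card_coe_set_eq, count]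
      exact Nat.card_congr (Equiv.subtypeSubtypeEquivSubtypeInter
        (fun f : Pt e →₀ ℕ => f.support ⊆ posF m N) (fun f => wsum f = d))
    rw [h2] at h1
    exact h1
  exact Pi.hasSum.mpr key

def W (π : {π : Pt e → ℕ // IsPart π ∧ InBox' m N π}) : MvPowerSeries (Sig e) ℚ :=
  ((∏ᶠ c ∈ {c : ℕ × (Fin e → ℕ) × ℕ | Corner π.1 c.1 c.2.1 c.2.2},
      MvPolynomial.X (Sum.inl c.1) *
        ∏ ℓ : Fin e, MvPolynomial.X (Sum.inr (ℓ, c.2.1 ℓ)) : MvPolynomial (Sig e) ℚ) :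
    MvPowerSeries (Sig e) ℚ)

lemma W_eq (π : {π : Pt e → ℕ // IsPart π ∧ InBox' m N π}) :
    W m N π = MvPowerSeries.monomial (wsum (PhiF m N π).1) 1 := by
  rw [W, wpoly_eq m N π.2.1 π.2.2, MvPolynomial.coe_monomial]
  congr 1
  rw [wsum, Finsupp.sum_of_support_subset _ (PhiF m N π).2 (fun p n => n • expo p)
    (fun p _ => zero_smul ℕ _), PhiF_coe]

lemma hasSum_W : HasSum (W m N) (SC (posF m N)) := by
  have h1 := hasSum_FT m N
  have h2 : (fun f : {f : Pt e →₀ ℕ // f.support ⊆ posF m N} =>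
      (MvPowerSeries.monomial (wsum f.1) 1 : MvPowerSeries (Sig e) ℚ)) ∘ (PhiEquiv m N)
      = W m N := funext fun π => (W_eq m N π).symm
  rw [← h2]
  exact (Equiv.hasSum_iff (PhiEquiv m N)).mpr h1

def toRho (π : {π : Pt e → ℕ // IsPart π ∧ InBox' m N π}) :
    {ρ : (Fin e → ℕ) → ℕ // IsPart' ρ ∧ ∀ i', ρ i' ≠ 0 → ∀ ℓ, i' ℓ < N ℓ} :=
  ⟨fun i' => π.1 (0, i'), by
    refine ⟨⟨?_, fun i j hij => π.2.1.2 (0, i) (0, j) le_rfl hij⟩,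
      fun i' h ℓ => (π.2.2 (0, i') h).2 ℓ⟩
    have hsub : Function.support (fun i' => π.1 (0, i'))
        ⊆ (fun i' : Fin e → ℕ => ((0:ℕ), i')) ⁻¹' (Function.support π.1) := fun i' h => h
    refine Set.Finite.subset (Set.Finite.preimage ?_ π.2.1.1) hsub
    exact Set.injOn_of_injective (fun a b hab => congrArg Prod.snd hab)⟩

lemma sh1_eq_diag {π : Pt e → ℕ} (hπ : IsPart π) : sh1 π = Diag (fun i' => π (0, i')) := by
  ext ⟨i', k⟩
  simp only [sh1, Diag, Set.mem_setOf_eq]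
  constructor
  · rintro ⟨i₁, h1, h2⟩
    exact ⟨h1, le_trans h2 (hπ.2 (0, i') (i₁, i') (Nat.zero_le _) fun ℓ => le_rfl)⟩
  · rintro ⟨h1, h2⟩
    exact ⟨0, h1, h2⟩

lemma diag_inj {ρ ρ' : (Fin e → ℕ) → ℕ} (h : Diag ρ = Diag ρ') : ρ = ρ' := by
  funext i'
  have hmem : ∀ k : ℕ, (1 ≤ k ∧ k ≤ ρ i') ↔ (1 ≤ k ∧ k ≤ ρ' i') := by
    intro k
    have := Set.ext_iff.mp h (i', k)
    simpa [Diag] using this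
  have h1 := hmem (ρ i')
  have h2 := hmem (ρ' i')
  omega

lemma sh1_iff {π : Pt e → ℕ} (hπ : IsPart π) (ρ : (Fin e → ℕ) → ℕ) :
    sh1 π = Diag ρ ↔ (fun i' => π (0, i')) = ρ := by
  constructor
  · intro h
    exact diag_inj ((sh1_eq_diag hπ).symm.trans h)
  · intro h
    rw [sh1_eq_diag hπ, h]

lemma finite_fiberPart {ρ : (Fin e → ℕ) → ℕ} (hρ : IsPart' ρ) :
    Finite {π : Pt e → ℕ // IsPart π ∧ InBox' m N π ∧ (fun i' => π (0, i')) = ρ} := by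
  classical
  set B := ρ (fun _ => 0) with hB
  apply Finite.of_injective (f := fun π : {π : Pt e → ℕ //
      IsPart π ∧ InBox' m N π ∧ (fun i' => π (0, i')) = ρ} =>
    (fun q : ↥(posF m N) => (⟨π.1 q.1, by
      have h1 : π.1 q.1 ≤ π.1 (0, q.1.2) :=
        π.2.1.2 (0, q.1.2) q.1 (Nat.zero_le _) (fun ℓ => le_rfl)
      have h2 : π.1 (0, q.1.2) = ρ q.1.2 := congrFun π.2.2.2 q.1.2
      have h3 : ρ q.1.2 ≤ B := hρ.2 (fun _ => 0) q.1.2 (fun ℓ => Nat.zero_le _)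
      omega⟩ : Fin (B+1))))
  intro π π' hh
  ext p
  by_cases hp : p ∈ posF m N
  · exact congrArg Fin.val (congrFun hh ⟨p, hp⟩)
  · have e1 : π.1 p = 0 := by
      by_contra hne
      exact hp ((mem_posF m N).mpr (π.2.2.1 p hne))
    have e2 : π'.1 p = 0 := by
      by_contra hne
      exact hp ((mem_posF m N).mpr (π'.2.2.1 p hne))
    rw [e1, e2]

lemma S_eq (ρ : (Fin e → ℕ) → ℕ) :
    {π : Pt e → ℕ | IsPart π ∧ InBox' m N π ∧ sh1 π = Diag ρ}
      = {π : Pt e → ℕ | IsPart π ∧ InBox' m N π ∧ (fun i' => π (0, i')) = ρ} := by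
  ext π
  simp only [Set.mem_setOf_eq]
  constructor
  · rintro ⟨h1, h2, h3⟩
    exact ⟨h1, h2, (sh1_iff h1 ρ).mp h3⟩
  · rintro ⟨h1, h2, h3⟩
    exact ⟨h1, h2, (sh1_iff h1 ρ).mpr h3⟩

lemma S_finite {ρ : (Fin e → ℕ) → ℕ} (hρ : IsPart' ρ) :
    {π : Pt e → ℕ | IsPart π ∧ InBox' m N π ∧ sh1 π = Diag ρ}.Finite := by
  rw [S_eq]
  exact Set.finite_coe_iff.mp (finite_fiberPart m N hρ)

lemma gFull'_cast (ρ : {ρ : (Fin e → ℕ) → ℕ // IsPart' ρ ∧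
    ∀ i', ρ i' ≠ 0 → ∀ ℓ, i' ℓ < N ℓ}) :
    ((gFull' e m N ρ.1 : MvPolynomial (ℕ ⊕ (Fin e × ℕ)) ℚ) :
      MvPowerSeries (ℕ ⊕ (Fin e × ℕ)) ℚ)
    = ∑ π ∈ (S_finite m N ρ.2.1).toFinset,
        ((∏ᶠ c ∈ {c : ℕ × (Fin e → ℕ) × ℕ | Corner π c.1 c.2.1 c.2.2},
          MvPolynomial.X (Sum.inl c.1) *
            ∏ ℓ : Fin e, MvPolynomial.X (Sum.inr (ℓ, c.2.1 ℓ)) : MvPolynomial (Sig e) ℚ) :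
          MvPowerSeries (Sig e) ℚ) := by
  rw [gFull', finsum_mem_eq_finite_toFinset_sum _ (S_finite m N ρ.2.1)]
  rw [← MvPolynomial.coeToMvPowerSeries.ringHom_apply, map_sum]
  refine Finset.sum_congr rfl fun π _ => ?_
  rw [MvPolynomial.coeToMvPowerSeries.ringHom_apply]

def eFiber (ρ : {ρ : (Fin e → ℕ) → ℕ // IsPart' ρ ∧
    ∀ i', ρ i' ≠ 0 → ∀ ℓ, i' ℓ < N ℓ}) :
    {π : {π : Pt e → ℕ // IsPart π ∧ InBox' m N π} // toRho m N π = ρ}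
      ≃ ↥((S_finite m N ρ.2.1).toFinset) :=
  { toFun := fun c => ⟨c.1.1, by
      rw [Set.Finite.mem_toFinset]
      refine ⟨c.1.2.1, c.1.2.2, ?_⟩
      rw [sh1_iff c.1.2.1]
      exact congrArg Subtype.val c.2⟩
    invFun := fun x => ⟨⟨x.1, by
      have hx := (Set.Finite.mem_toFinset (S_finite m N ρ.2.1)).mp x.2
      exact ⟨hx.1, hx.2.1⟩⟩, by
      have hx := (Set.Finite.mem_toFinset (S_finite m N ρ.2.1)).mp x.2
      refine Subtype.ext ?_
      exact (sh1_iff hx.1 ρ.1).mp hx.2.2⟩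
    left_inv := fun c => by ext : 3; rfl
    right_inv := fun x => by ext : 2; rfl }

lemma fiber_hasSum (ρ : {ρ : (Fin e → ℕ) → ℕ // IsPart' ρ ∧
    ∀ i', ρ i' ≠ 0 → ∀ ℓ, i' ℓ < N ℓ}) :
    HasSum (fun c : {π : {π : Pt e → ℕ // IsPart π ∧ InBox' m N π} // toRho m N π = ρ} =>
      W m N c.1)
      ((gFull' e m N ρ.1 : MvPolynomial (ℕ ⊕ (Fin e × ℕ)) ℚ) :
        MvPowerSeries (ℕ ⊕ (Fin e × ℕ)) ℚ) := by
  classical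
  have : Finite {π : {π : Pt e → ℕ // IsPart π ∧ InBox' m N π} // toRho m N π = ρ} :=
    Finite.of_equiv _ (eFiber m N ρ).symm
  have hft := Fintype.ofFinite
    {π : {π : Pt e → ℕ // IsPart π ∧ InBox' m N π} // toRho m N π = ρ}
  have h1 := hasSum_fintype (fun c : {π : {π : Pt e → ℕ // IsPart π ∧ InBox' m N π} //
    toRho m N π = ρ} => W m N c.1)
  have h2 : (∑ c : {π : {π : Pt e → ℕ // IsPart π ∧ InBox' m N π} // toRho m N π = ρ},
      W m N c.1)
      = ((gFull' e m N ρ.1 : MvPolynomial (ℕ ⊕ (Fin e × ℕ)) ℚ) :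
        MvPowerSeries (ℕ ⊕ (Fin e × ℕ)) ℚ) := by
    rw [gFull'_cast m N ρ, ← Finset.sum_coe_sort ((S_finite m N ρ.2.1).toFinset)]
    exact Fintype.sum_equiv (eFiber m N ρ) _ _ (fun c => by rw [W]; rfl)
  rw [h2] at h1
  exact h1

lemma total_hasSum :
    HasSum (fun ρ : {ρ : (Fin e → ℕ) → ℕ // IsPart' ρ ∧
        ∀ i', ρ i' ≠ 0 → ∀ ℓ, i' ℓ < N ℓ} =>
      ((gFull' e m N ρ.1 : MvPolynomial (ℕ ⊕ (Fin e × ℕ)) ℚ) :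
        MvPowerSeries (ℕ ⊕ (Fin e × ℕ)) ℚ))
      (SC (posF m N)) := by
  have hsig : HasSum (fun x : (Σ ρ : {ρ : (Fin e → ℕ) → ℕ // IsPart' ρ ∧
      ∀ i', ρ i' ≠ 0 → ∀ ℓ, i' ℓ < N ℓ},
      {π : {π : Pt e → ℕ // IsPart π ∧ InBox' m N π} // toRho m N π = ρ}) => W m N x.2.1)
      (SC (posF m N)) :=
    (Equiv.hasSum_iff (Equiv.sigmaFiberEquiv (toRho m N))).mpr (hasSum_W m N)
  exact HasSum.sigma hsig (fun ρ => fiber_hasSum m N ρ)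

lemma RHS_eq :
    (∏ i₁ ∈ Finset.range m, ∏ v : (∀ ℓ : Fin e, Fin (N ℓ)),
      (1 - MvPowerSeries.X (Sum.inl i₁) *
        ∏ ℓ : Fin e, MvPowerSeries.X (Sum.inr (ℓ, (v ℓ : ℕ))) :
          MvPowerSeries (Sig e) ℚ)⁻¹)
    = SC (posF m N) := by
  classical
  rw [← geom_prod (posF m N), posF, Finset.prod_product]
  refine Finset.prod_congr rfl fun i₁ _ => ?_
  have hfac : ∀ w : Fin e → ℕ,
      (1 - MvPowerSeries.X (Sum.inl i₁) *
        ∏ ℓ : Fin e, MvPowerSeries.X (Sum.inr (ℓ, w ℓ)) : MvPowerSeries (Sig e) ℚ)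
      = 1 - mon (i₁, w) := by
    intro w
    congr 1
    have h := congrArg (fun φ : MvPolynomial (Sig e) ℚ =>
      MvPolynomial.coeToMvPowerSeries.ringHom (R := ℚ) φ) (X_prod_eq_monomial (i₁, w))
    simp only [map_mul, map_prod] at h
    simp only [MvPolynomial.coeToMvPowerSeries.ringHom_apply, MvPolynomial.coe_X,
      MvPolynomial.coe_monomial] at h
    rw [h, mon]
  refine Finset.prod_bij' (i := fun (v : ∀ ℓ : Fin e, Fin (N ℓ)) _ => fun ℓ => (v ℓ : ℕ))
    (j := fun w hw => fun ℓ => ⟨w ℓ, by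
      have := Fintype.mem_piFinset.mp hw ℓ
      simpa using this⟩) ?_ ?_ ?_ ?_ ?_
  · intro v _
    refine Fintype.mem_piFinset.mpr fun ℓ => ?_
    simp
  · intro w hw
    exact Finset.mem_univ _
  · intro v _
    rfl
  · intro w hw
    rfl
  · intro v _
    rw [hfac]

end Assembly

end CAux

/-- Cauchy-type identity: the sum of `g_ρ` over all `(d-1)`-dimensional partitions
`ρ ∈ P(n₂, …, n_d, ∞)` equals `∏ (1 - x^{(1)}_{i₁} ⋯ x^{(d)}_{i_d})⁻¹` over the box. -/
theorem cauchy_identity {e : ℕ} (m : ℕ) (N : Fin e → ℕ) :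
    ∑' ρ : {ρ : (Fin e → ℕ) → ℕ // IsPart' ρ ∧ ∀ i', ρ i' ≠ 0 → ∀ ℓ, i' ℓ < N ℓ},
        ((gFull' e m N ρ.1 : MvPolynomial (ℕ ⊕ (Fin e × ℕ)) ℚ) :
          MvPowerSeries (ℕ ⊕ (Fin e × ℕ)) ℚ)
      = ∏ i₁ ∈ Finset.range m, ∏ v : (∀ ℓ : Fin e, Fin (N ℓ)),
          (1 - MvPowerSeries.X (Sum.inl i₁) *
            ∏ ℓ : Fin e, MvPowerSeries.X (Sum.inr (ℓ, (v ℓ : ℕ))))⁻¹ := by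
  rw [CAux.RHS_eq m N]
  exact (CAux.total_hasSum m N).tsum_eq
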